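/- Let G be a graph and let m ≥ 0. Then the energy of the m-duplicate graph of G satisfies ε(Dᵐ(G)) = 2ᵐ·ε(G). -/

import Mathlib

open Matrix SimpleGraph Finset

variable {V W : Type*}

/-- The adjacency matrix of a simple graph over ℝ is Hermitian. -/
lemma adjMatrix_isHermitian [Fintype V] [DecidableEq V] (G : SimpleGraph V)
    [DecidableRel G.Adj] : (G.adjMatrix ℝ).IsHermitian := by
  rw [Matrix.IsHermitian, Matrix.conjTranspose_eq_transpose_of_trivial]
  exact G.isSymm_adjMatrix

/-- The energy of a finite simple graph: the sum of the absolute values of the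
eigenvalues of its real adjacency matrix. -/
noncomputable def graphEnergy [Fintype V] [DecidableEq V] (G : SimpleGraph V) : ℝ := by
  classical
  exact ∑ i, |(adjMatrix_isHermitian G).eigenvalues i|

/-- The spectrum of a finite simple graph: the multiset of eigenvalues (with
multiplicity) of its real adjacency matrix. -/
noncomputable def graphSpectrum [Fintype V] [DecidableEq V] (G : SimpleGraph V) : Multiset ℝ := by
  classical
  exact Finset.univ.val.map (adjMatrix_isHermitian G).eigenvalues

/-- A graph is integral if every eigenvalue of its adjacency matrix is an integer. -/
def IsIntegralGraph [Fintype V] [DecidableEq V] (G : SimpleGraph V) : Prop :=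
  ∀ x ∈ graphSpectrum G, ∃ k : ℤ, x = (k : ℝ)

/-- The m-shadow graph of `G`, on vertex set `Fin m × V`: `(i,u)` and `(j,v)` are
adjacent iff `u` and `v` are adjacent in `G`. -/
def shadowGraph (m : ℕ) (G : SimpleGraph V) : SimpleGraph (Fin m × V) where
  Adj x y := G.Adj x.2 y.2
  symm := ⟨fun _ _ h => h.symm⟩
  loopless := ⟨fun _ h => (G.ne_of_adj h) rfl⟩

/-- The duplicate graph of `G`, on vertex set `V ⊕ V`: `inl a` is adjacent to
`inr b` iff `a` and `b` are adjacent in `G`; no other adjacencies. -/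
def duplicateGraph (G : SimpleGraph V) : SimpleGraph (V ⊕ V) where
  Adj x y :=
    match x, y with
    | Sum.inl a, Sum.inr b => G.Adj a b
    | Sum.inr a, Sum.inl b => G.Adj a b
    | _, _ => False
  symm := ⟨by rintro (a | a) (b | b) h <;> first | exact h.symm | exact h.elim⟩
  loopless := ⟨by rintro (a | a) h <;> exact h⟩

/-- The Kronecker (tensor) product of two simple graphs. -/
def tensorGraph (G : SimpleGraph V) (H : SimpleGraph W) : SimpleGraph (V × W) where
  Adj x y := G.Adj x.1 y.1 ∧ H.Adj x.2 y.2
  symm := ⟨fun _ _ h => ⟨h.1.symm, h.2.symm⟩⟩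
  loopless := ⟨fun _ h => (G.ne_of_adj h.1) rfl⟩

/-- The m-splitting graph of `G`, on vertex set `V ⊕ (Fin m × V)`: original
vertices keep their adjacencies, an original vertex `u` is adjacent to a copy
`(i,v)` iff `u` is adjacent to `v` in `G`, and copies are pairwise non-adjacent. -/
def splittingGraph (m : ℕ) (G : SimpleGraph V) : SimpleGraph (V ⊕ (Fin m × V)) where
  Adj x y :=
    match x, y with
    | Sum.inl u, Sum.inl v => G.Adj u v
    | Sum.inl u, Sum.inr iv => G.Adj u iv.2
    | Sum.inr iu, Sum.inl v => G.Adj iu.2 v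
    | Sum.inr _, Sum.inr _ => False
  symm := ⟨by rintro (u | iu) (v | iv) h <;> first | exact h.symm | exact h.elim⟩
  loopless := ⟨by rintro (u | iu) h <;> first | exact (G.ne_of_adj h) rfl | exact h⟩

/-- The join of two simple graphs: their disjoint union together with all edges
between the two parts. -/
def joinGraph (G : SimpleGraph V) (H : SimpleGraph W) : SimpleGraph (V ⊕ W) where
  Adj x y :=
    match x, y with
    | Sum.inl a, Sum.inl b => G.Adj a b
    | Sum.inr a, Sum.inr b => H.Adj a b
    | _, _ => True
  symm := ⟨by rintro (a | a) (b | b) h <;> first | exact h.symm | trivial⟩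
  loopless := ⟨by rintro (a | a) h <;> first | exact (G.ne_of_adj h) rfl | exact (H.ne_of_adj h) rfl⟩

/-- The superpath graph on a sequence of part sizes: independent sets `W i` of
size `a i`, where vertices in parts `i` and `j` are adjacent iff `|i - j| = 1`. -/
def superpathGraph {t : ℕ} (a : Fin t → ℕ) : SimpleGraph (Σ i : Fin t, Fin (a i)) where
  Adj x y := (x.1 : ℕ) + 1 = (y.1 : ℕ) ∨ (y.1 : ℕ) + 1 = (x.1 : ℕ)
  symm := ⟨fun _ _ h => h.symm⟩
  loopless := ⟨fun x h => by omega⟩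

/-- The vertex type of the m-fold duplicate graph. -/
def iterDupVertex (V : Type*) (m : ℕ) : Type _ :=
  Nat.rec V (fun _ T => T ⊕ T) m

instance instFintypeIterDupVertex {V : Type*} [Fintype V] : ∀ m, Fintype (iterDupVertex V m)
  | 0 => inferInstanceAs (Fintype V)
  | m + 1 =>
    letI := instFintypeIterDupVertex (V := V) m
    inferInstanceAs (Fintype (iterDupVertex V m ⊕ iterDupVertex V m))

instance instDecidableEqIterDupVertex {V : Type*} [DecidableEq V] :
    ∀ m, DecidableEq (iterDupVertex V m)
  | 0 => inferInstanceAs (DecidableEq V)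
  | m + 1 =>
    letI := instDecidableEqIterDupVertex (V := V) m
    inferInstanceAs (DecidableEq (iterDupVertex V m ⊕ iterDupVertex V m))

/-- The m-duplicate graph: `D⁰(G) = G` and `Dᵐ⁺¹(G) = D(Dᵐ(G))`. -/
def iterDup (G : SimpleGraph V) : ∀ m, SimpleGraph (iterDupVertex V m)
  | 0 => G
  | m + 1 => duplicateGraph (iterDup G m)

section Aux

open Polynomial

variable {n : Type*} [Fintype n] [DecidableEq n]

lemma aux_det_fromBlocks_symm {R : Type*} [CommRing R] (P Q : Matrix n n R) :
    (fromBlocks P Q Q P).det = (P + Q).det * (P - Q).det := by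
  have h : fromBlocks (1 : Matrix n n R) 1 0 1 * fromBlocks P Q Q P *
      fromBlocks 1 (-1) 0 1 = fromBlocks (P + Q) 0 Q (P - Q) := by
    simp only [fromBlocks_multiply, Matrix.one_mul, Matrix.mul_one, Matrix.zero_mul,
      Matrix.mul_zero, Matrix.mul_neg, add_zero, zero_add]
    congr 1 <;> abel
  have hdet := congrArg Matrix.det h
  rw [det_mul, det_mul, det_fromBlocks_zero₂₁, det_fromBlocks_zero₂₁,
    det_fromBlocks_zero₁₂, det_one, one_mul, mul_one, one_mul] at hdet
  exact hdet

lemma aux_charpoly_fromBlocks_symm {R : Type*} [CommRing R] (A : Matrix n n R) :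
    (fromBlocks 0 A A 0).charpoly = A.charpoly * (-A).charpoly := by
  rw [Matrix.charpoly, charmatrix_fromBlocks, aux_det_fromBlocks_symm]
  have h0 : charmatrix (0 : Matrix n n R) = Matrix.scalar n (X : R[X]) := by
    simp [charmatrix]
  have h1 : charmatrix (0 : Matrix n n R) + -A.map (C : R →+* R[X]) = charmatrix A := by
    rw [h0]; rw [charmatrix]; rfl
  have h2 : charmatrix (0 : Matrix n n R) - -A.map (C : R →+* R[X]) = charmatrix (-A) := by
    rw [h0, charmatrix, sub_neg_eq_add]
    congr 1
    ext i j
    simp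
  rw [h1, h2, Matrix.charpoly, Matrix.charpoly]

lemma aux_charpoly_conj (U : Matrix.unitaryGroup n ℝ) (D : Matrix n n ℝ) :
    ((U : Matrix n n ℝ) * D * star (U : Matrix n n ℝ)).charpoly = D.charpoly := by
  set V : Matrix n n ℝ := star (U : Matrix n n ℝ) with hV
  have hUV : (U : Matrix n n ℝ) * V = 1 := Matrix.mem_unitaryGroup_iff.mp U.2
  have hVU : V * (U : Matrix n n ℝ) = 1 := Matrix.mem_unitaryGroup_iff'.mp U.2
  set f : ℝ →+* ℝ[X] := (C : ℝ →+* ℝ[X])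
  have key : charmatrix ((U : Matrix n n ℝ) * D * V) =
      (U : Matrix n n ℝ).map f * charmatrix D * V.map f := by
    rw [charmatrix, charmatrix]
    rw [Matrix.mul_sub, Matrix.sub_mul]
    congr 1
    · have hc : (U : Matrix n n ℝ).map f * Matrix.scalar n (X : ℝ[X]) =
          Matrix.scalar n (X : ℝ[X]) * (U : Matrix n n ℝ).map f :=
        (Matrix.scalar_commute (X : ℝ[X]) (fun r => Commute.all _ r) _).symm
      rw [hc, Matrix.mul_assoc]
      have : (U : Matrix n n ℝ).map f * V.map f = 1 := by
        rw [← Matrix.map_mul, hUV, Matrix.map_one f (map_zero f) (map_one f)]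
      rw [this, Matrix.mul_one]
    · simp only [RingHom.mapMatrix_apply]
      rw [← Matrix.map_mul, ← Matrix.map_mul]
  rw [Matrix.charpoly, key, det_mul, det_mul]
  have : det ((U : Matrix n n ℝ).map f) * det (V.map f) = 1 := by
    rw [← det_mul, ← Matrix.map_mul, hUV, Matrix.map_one f (map_zero f) (map_one f), det_one]
  calc det ((U : Matrix n n ℝ).map f) * det (charmatrix D) * det (V.map f)
      = det (charmatrix D) * (det ((U : Matrix n n ℝ).map f) * det (V.map f)) := by ring
    _ = det (charmatrix D) := by rw [this, mul_one]

lemma aux_charpoly_diagonal {R : Type*} [CommRing R] (v : n → R) :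
    (Matrix.diagonal v).charpoly = ∏ i, (X - C (v i)) := by
  have h : charmatrix (Matrix.diagonal v) = Matrix.diagonal fun i => (X : R[X]) - C (v i) := by
    ext i j
    by_cases hij : i = j
    · subst hij; simp
    · rw [charmatrix_apply_ne _ _ _ hij, Matrix.diagonal_apply_ne _ hij,
        Matrix.diagonal_apply_ne _ hij]
      simp
  rw [Matrix.charpoly, h, det_diagonal]

lemma aux_roots_charpoly {A : Matrix n n ℝ} (hA : A.IsHermitian) :
    A.charpoly.roots = Finset.univ.val.map hA.eigenvalues := by
  have h1 : A.charpoly = ∏ i, (X - C (hA.eigenvalues i)) := by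
    conv_lhs => rw [hA.spectral_theorem, Unitary.conjStarAlgAut_apply]
    rw [aux_charpoly_conj]
    have : Matrix.diagonal (RCLike.ofReal ∘ hA.eigenvalues) = Matrix.diagonal hA.eigenvalues := by
      congr 1
    rw [this, aux_charpoly_diagonal]
  rw [h1, Finset.prod_eq_multiset_prod]
  have h2 : Multiset.map (fun i => X - C (hA.eigenvalues i)) Finset.univ.val =
      Multiset.map (fun a => X - C a) (Finset.univ.val.map hA.eigenvalues) := by
    rw [Multiset.map_map]; rfl
  rw [h2, roots_multiset_prod_X_sub_C]

lemma aux_roots_charpoly_neg {A : Matrix n n ℝ} (hA : A.IsHermitian) :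
    (-A).charpoly.roots = Finset.univ.val.map fun i => -hA.eigenvalues i := by
  have hneg : -A = (hA.eigenvectorUnitary : Matrix n n ℝ) *
      Matrix.diagonal (fun i => -hA.eigenvalues i) *
      star (hA.eigenvectorUnitary : Matrix n n ℝ) := by
    conv_lhs => rw [hA.spectral_theorem, Unitary.conjStarAlgAut_apply]
    have : Matrix.diagonal (RCLike.ofReal ∘ hA.eigenvalues) = Matrix.diagonal hA.eigenvalues := by
      congr 1
    rw [this]
    rw [show Matrix.diagonal (fun i => -hA.eigenvalues i) = -Matrix.diagonal hA.eigenvalues by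
      rw [← Matrix.diagonal_neg]]
    rw [Matrix.mul_neg, Matrix.neg_mul]
  rw [hneg, aux_charpoly_conj, aux_charpoly_diagonal, Finset.prod_eq_multiset_prod]
  have h2 : Multiset.map (fun i => X - C (-hA.eigenvalues i)) Finset.univ.val =
      Multiset.map (fun a => X - C a) (Finset.univ.val.map fun i => -hA.eigenvalues i) := by
    rw [Multiset.map_map]; rfl
  rw [h2, roots_multiset_prod_X_sub_C]

lemma aux_sum_abs_eigenvalues {A : Matrix n n ℝ} (hA : A.IsHermitian) :
    ∑ i, |hA.eigenvalues i| = (A.charpoly.roots.map fun x => |x|).sum := by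
  rw [aux_roots_charpoly hA, Multiset.map_map, Finset.sum_eq_multiset_sum]
  rfl

lemma graphEnergy_eq_roots [Fintype V] [DecidableEq V] (G : SimpleGraph V)
    [inst : DecidableRel G.Adj] :
    graphEnergy G = (((G.adjMatrix ℝ).charpoly.roots.map fun x : ℝ => |x|)).sum := by
  unfold graphEnergy
  rw [aux_sum_abs_eigenvalues]
  have hsub : ∀ (i1 i2 : DecidableRel G.Adj),
      (@SimpleGraph.adjMatrix ℝ V G i1 _ _) = @SimpleGraph.adjMatrix ℝ V G i2 _ _ := by
    intro i1 i2
    ext i j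
    by_cases h : G.Adj i j <;> simp [h]
  exact congrArg (fun M : Matrix V V ℝ => (M.charpoly.roots.map fun x : ℝ => |x|).sum)
    (hsub _ _)

lemma adjMatrix_duplicateGraph [Fintype V] [DecidableEq V] (G : SimpleGraph V)
    [DecidableRel G.Adj] [DecidableRel (duplicateGraph G).Adj] :
    (duplicateGraph G).adjMatrix ℝ =
      fromBlocks 0 (G.adjMatrix ℝ) (G.adjMatrix ℝ) 0 := by
  ext i j
  rcases i with a | a <;> rcases j with b | b <;>
    by_cases h : G.Adj a b <;>
    rw [SimpleGraph.adjMatrix_apply] <;>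
    simp [duplicateGraph, fromBlocks, h]

lemma graphEnergy_duplicate [Fintype V] [DecidableEq V] (G : SimpleGraph V) :
    graphEnergy (duplicateGraph G) = 2 * graphEnergy G := by
  classical
  rw [graphEnergy_eq_roots (duplicateGraph G), graphEnergy_eq_roots G]
  rw [adjMatrix_duplicateGraph G, aux_charpoly_fromBlocks_symm,
    Polynomial.roots_mul (mul_ne_zero (Matrix.charpoly_monic _).ne_zero
      (Matrix.charpoly_monic _).ne_zero),
    Multiset.map_add, Multiset.sum_add,
    aux_roots_charpoly (adjMatrix_isHermitian G),
    aux_roots_charpoly_neg (adjMatrix_isHermitian G)]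
  simp only [Multiset.map_map, Function.comp_def, abs_neg]
  ring

end Aux

/-- The energy of the m-duplicate graph of `G` is `2^m · ε(G)`. -/
theorem energy_iterDup [Fintype V] [DecidableEq V] (G : SimpleGraph V) (m : ℕ) :
    graphEnergy (iterDup G m) = 2 ^ m * graphEnergy G := by
  induction m with
  | zero => simp [iterDup]; rfl
  | succ m ih =>
    have step : graphEnergy (iterDup G (m + 1)) = 2 * graphEnergy (iterDup G m) :=
      graphEnergy_duplicate (iterDup G m)
    rw [step, ih, pow_succ]
    ring
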